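/- Let d ≥ 3 and t ∈ (0,1], and set u = (1,t), v = (1,-t) ∈ ℝ². Then (‖u^{⊗d} - v^{⊗d}‖_σ)² > (1 - 1/d)^{d-1} · (‖u^{⊗d} - v^{⊗d}‖_F)², where ‖·‖_σ denotes the spectral norm max_{‖w‖=1}|⟨u,w⟩^d - ⟨v,w⟩^d| and the Frobenius norm satisfies ‖u^{⊗d} - v^{⊗d}‖_F² = 2(1+t²)^d - 2(1-t²)^d. -/

import Mathlib

lemma trip_nonneg (n : ℕ) : 0 ≤ (n:ℝ)*((n:ℝ)-1)*((n:ℝ)-2) := by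
  rcases n with _|_|n
  · norm_num
  · norm_num
  · push_cast
    have h0 : (0:ℝ) ≤ (n:ℝ) := Nat.cast_nonneg n
    nlinarith [mul_nonneg (mul_nonneg h0 h0) h0, mul_nonneg h0 h0, h0]

lemma FG (p r : ℝ) (hr : 0 ≤ r) (hrp : r ≤ p) (n : ℕ) :
    2*(n:ℝ)*p^(n+2)*r + ((n:ℝ)*((n:ℝ)-1)*((n:ℝ)-2)/3)*p^n*r^3
      ≤ p^3*((p+r)^n - (p-r)^n) ∧
    2*p^(n+3) + (n:ℝ)*((n:ℝ)-1)*p^(n+1)*r^2 ≤ p^3*((p+r)^n + (p-r)^n) := by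
  have hp : 0 ≤ p := le_trans hr hrp
  induction n with
  | zero => norm_num; linarith [pow_nonneg hp 3]
  | succ n ih =>
    obtain ⟨ih1, ih2⟩ := ih
    have e1 : p^(n+2) = p^n*p^2 := by ring
    have e2 : p^(n+3) = p^n*p^3 := by ring
    have e3 : p^(n+1) = p^n*p := by ring
    have e4 : p^(n+1+2) = p^n*p^3 := by ring
    have e5 : p^(n+1+3) = p^n*p^3*p := by ring
    have e6 : p^(n+1+1) = p^n*p^2 := by ring
    have e7 : (p+r)^(n+1) = (p+r)^n*(p+r) := by ring
    have e8 : (p-r)^(n+1) = (p-r)^n*(p-r) := by ring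
    rw [e1] at ih1
    rw [e2, e3] at ih2
    rw [e4, e5, e6, e3, e7, e8]
    have hc := trip_nonneg n
    set A := (p+r)^n with hA
    set B := (p-r)^n with hB
    set P := p^n with hP
    have hPn : 0 ≤ P := pow_nonneg hp n
    have h1 := mul_le_mul_of_nonneg_left ih1 hp
    have h3 := mul_le_mul_of_nonneg_left ih1 hr
    have h2 := mul_le_mul_of_nonneg_left ih2 hp
    have h4 := mul_le_mul_of_nonneg_left ih2 hr
    have hr4 : 0 ≤ P*(r*r*r*r) := mul_nonneg hPn (by positivity)
    constructor
    · push_cast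
      linarith [h1, h4, mul_nonneg hc hr4]
    · push_cast
      linarith [h2, h3, mul_nonneg hc hr4]

lemma HE (n : ℕ) (τ : ℝ) (hτ : 0 ≤ τ) (hnτ : (n:ℝ)*τ ≤ 1) :
    (1+τ)^n - (1-τ)^n ≤ 2*(n:ℝ)*τ + (2/5)*(n:ℝ)^3*τ^3 ∧
    (1+τ)^n + (1-τ)^n ≤ 2 + (6/5)*(n:ℝ)^2*τ^2 := by
  induction n with
  | zero => norm_num
  | succ n ih =>
    have h0 : (0:ℝ) ≤ (n:ℝ) := Nat.cast_nonneg n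
    have hn' : (n:ℝ)*τ ≤ 1 := by push_cast at hnτ; nlinarith
    obtain ⟨ih1, ih2⟩ := ih hn'
    have e7 : (1+τ)^(n+1) = (1+τ)^n*(1+τ) := by ring
    have e8 : (1-τ)^(n+1) = (1-τ)^n*(1-τ) := by ring
    rw [e7, e8]
    set A := (1+τ)^n with hA
    set B := (1-τ)^n with hB
    push_cast
    push_cast at hnτ
    have m1 := mul_le_mul_of_nonneg_left ih2 hτ
    have m2 := mul_le_mul_of_nonneg_left ih1 hτ
    have hτ3 : 0 ≤ τ^3 := by positivity
    have hτ2 : 0 ≤ τ^2 := by positivity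
    have hsq : (n:ℝ)^2*τ^2 ≤ 1 := by nlinarith [mul_nonneg h0 hτ]
    have hkey : (n:ℝ)^3*τ^4 ≤ (n:ℝ)*τ^2 := by
      have := mul_le_mul_of_nonneg_left hsq (mul_nonneg h0 hτ2)
      nlinarith [this]
    constructor
    · linarith [ih1, m1, mul_nonneg h0 hτ3, hτ3]
    · linarith [ih2, m2, hkey, mul_nonneg h0 hτ2, hτ2]

lemma quad_nonneg (n : ℕ) : 0 ≤ (n:ℝ)*((n:ℝ)-1)*((n:ℝ)-2)*((n:ℝ)-3) := by
  rcases n with _|_|_|n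
  · norm_num
  · norm_num
  · norm_num
  · push_cast
    have h0 : (0:ℝ) ≤ (n:ℝ) := Nat.cast_nonneg n
    nlinarith [mul_nonneg (mul_nonneg (mul_nonneg h0 h0) h0) h0, mul_nonneg (mul_nonneg h0 h0) h0, mul_nonneg h0 h0, h0]

lemma P4 (x : ℝ) (hx : 0 ≤ x) (n : ℕ) :
    1 + (n:ℝ)*x + ((n:ℝ)*((n:ℝ)-1)/2)*x^2 + ((n:ℝ)*((n:ℝ)-1)*((n:ℝ)-2)/6)*x^3
      + ((n:ℝ)*((n:ℝ)-1)*((n:ℝ)-2)*((n:ℝ)-3)/24)*x^4 ≤ (1+x)^n := by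
  induction n with
  | zero => norm_num
  | succ n ih =>
    have h0 : (0:ℝ) ≤ (n:ℝ) := Nat.cast_nonneg n
    have e7 : (1+x)^(n+1) = (1+x)^n*(1+x) := by ring
    rw [e7]
    have m1 := mul_le_mul_of_nonneg_left ih (by linarith : (0:ℝ) ≤ 1+x)
    have hq := quad_nonneg n
    have hx5 : 0 ≤ x^5 := by positivity
    push_cast
    nlinarith [m1, mul_nonneg hq hx5]

set_option maxHeartbeats 1600000 in
lemma Kd (d : ℕ) (hd : 4 ≤ d) :
    (((d:ℝ)-1)/((d:ℝ)+1))^d + 2*(((d:ℝ)-1)/(d:ℝ))^(d-1) < 1 := by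
  by_cases hd20 : d < 20
  · interval_cases d <;> norm_num
  · push_neg at hd20
    have hD20 : (20:ℝ) ≤ (d:ℝ) := by exact_mod_cast hd20
    set D := (d:ℝ) with hD
    have hD1 : (0:ℝ) < D - 1 := by linarith
    have hDpos : (0:ℝ) < D := by linarith
    -- Term 1 : ((D-1)/(D+1))^d ≤ 2/13
    have hx : (0:ℝ) ≤ 2/(D-1) := by positivity
    have p4 := P4 (2/(D-1)) hx d
    rw [← hD] at p4
    have hS1 : (13:ℝ)/2 ≤ 1 + D*(2/(D-1)) + (D*(D-1)/2)*(2/(D-1))^2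
        + (D*(D-1)*(D-2)/6)*(2/(D-1))^3 + (D*(D-1)*(D-2)*(D-3)/24)*(2/(D-1))^4 := by
      have h4 : (0:ℝ) < (D-1)^4 := by positivity
      rw [← mul_le_mul_iff_of_pos_right h4]
      have expand : (1 + D*(2/(D-1)) + (D*(D-1)/2)*(2/(D-1))^2
          + (D*(D-1)*(D-2)/6)*(2/(D-1))^3 + (D*(D-1)*(D-2)*(D-3)/24)*(2/(D-1))^4) * (D-1)^4
          = (D-1)^4 + 4*D*(D-1)^3 + (4/3)*D*(D-2)*(D-1)^2 + (2/3)*D*(D-2)*(D-3)*(D-1) := by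
        field_simp
        ring
      rw [expand]
      nlinarith [hD20, sq_nonneg (D-20), mul_nonneg (mul_nonneg (by linarith : (0:ℝ) ≤ D-20) (by linarith : (0:ℝ) ≤ D-20)) (by linarith : (0:ℝ) ≤ D-20), sq_nonneg ((D-20)*(D-20))]
    have hpow1 : (13:ℝ)/2 ≤ (1 + 2/(D-1))^d := le_trans hS1 p4
    have hT1 : (((D:ℝ)-1)/(D+1))^d ≤ 2/13 := by
      have hprod : ((D-1)/(D+1)) * (1 + 2/(D-1)) = 1 := by
        field_simp
        ring
      have hppow : ((D-1)/(D+1))^d * (1 + 2/(D-1))^d = 1 := by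
        rw [← mul_pow, hprod, one_pow]
      have hbase : (0:ℝ) ≤ ((D-1)/(D+1)) := by positivity
      have hbp : (0:ℝ) ≤ ((D-1)/(D+1))^d := pow_nonneg hbase d
      nlinarith [mul_le_mul_of_nonneg_left hpow1 hbp]
    -- Term 2 : ((D-1)/D)^(d-1) ≤ 5/13
    have hy : (0:ℝ) ≤ 1/(D-1) := by positivity
    have p42 := P4 (1/(D-1)) hy (d-1)
    have hcast : ((d-1:ℕ):ℝ) = D - 1 := by
      rw [hD]
      rw [Nat.cast_sub (by omega)]
      norm_num
    rw [hcast] at p42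
    have hS2 : (13:ℝ)/5 ≤ 1 + (D-1)*(1/(D-1)) + ((D-1)*((D-1)-1)/2)*(1/(D-1))^2
        + ((D-1)*((D-1)-1)*((D-1)-2)/6)*(1/(D-1))^3
        + ((D-1)*((D-1)-1)*((D-1)-2)*((D-1)-3)/24)*(1/(D-1))^4 := by
      have h3 : (0:ℝ) < (D-1)^3 := by positivity
      rw [← mul_le_mul_iff_of_pos_right h3]
      have expand : (1 + (D-1)*(1/(D-1)) + ((D-1)*((D-1)-1)/2)*(1/(D-1))^2
        + ((D-1)*((D-1)-1)*((D-1)-2)/6)*(1/(D-1))^3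
        + ((D-1)*((D-1)-1)*((D-1)-2)*((D-1)-3)/24)*(1/(D-1))^4) * (D-1)^3
          = 2*(D-1)^3 + (D-2)*(D-1)^2/2 + (D-2)*(D-3)*(D-1)/6 + (D-2)*(D-3)*(D-4)/24 := by
        field_simp
        ring
      rw [expand]
      nlinarith [hD20, sq_nonneg (D-20), mul_nonneg (mul_nonneg (by linarith : (0:ℝ) ≤ D-20) (by linarith : (0:ℝ) ≤ D-20)) (by linarith : (0:ℝ) ≤ D-20)]
    have hpow2 : (13:ℝ)/5 ≤ (1 + 1/(D-1))^(d-1) := le_trans hS2 p42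
    have hT2 : ((D-1)/D)^(d-1) ≤ 5/13 := by
      have hprod : ((D-1)/D) * (1 + 1/(D-1)) = 1 := by
        field_simp
        ring
      have hppow : ((D-1)/D)^(d-1) * (1 + 1/(D-1))^(d-1) = 1 := by
        rw [← mul_pow, hprod, one_pow]
      have hbase : (0:ℝ) ≤ ((D-1)/D) := by positivity
      have hbp : (0:ℝ) ≤ ((D-1)/D)^(d-1) := pow_nonneg hbase _
      nlinarith [mul_le_mul_of_nonneg_left hpow2 hbp]
    linarith [hT1, hT2]

set_option maxHeartbeats 800000 in
lemma w1_case (d : ℕ) (hd : 4 ≤ d) (t : ℝ) (ht0 : 0 < t) (ht1 : t ≤ 1)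
    (hτ : 1 ≤ t^2*(d:ℝ)) :
    ∃ x y : ℝ, x^2 + y^2 = 1 ∧
      (1 - 1/(d:ℝ))^(d-1) * (2*(1+t^2)^d - 2*(1-t^2)^d) < |(x + t*y)^d - (x - t*y)^d|^2 := by
  set D := (d:ℝ) with hD
  have hD4 : (4:ℝ) ≤ D := by rw [hD]; exact_mod_cast hd
  have hc : (0:ℝ) < 1 + t^2 := by nlinarith
  set c := 1 + t^2 with hcdef
  set w := 1 - t^2 with hwdef
  have hw0 : 0 ≤ w := by nlinarith
  set s := Real.sqrt c with hs
  have hs2 : s^2 = c := Real.sq_sqrt (le_of_lt hc)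
  have hspos : 0 < s := Real.sqrt_pos.mpr hc
  refine ⟨s⁻¹, t*s⁻¹, ?_, ?_⟩
  · field_simp
    nlinarith [hs2]
  · have hxty : s⁻¹ + t*(t*s⁻¹) = s := by
      field_simp
      nlinarith [hs2]
    have hxty2 : s⁻¹ - t*(t*s⁻¹) = w/s := by
      field_simp
      nlinarith [hs2]
    rw [hxty, hxty2, sq_abs, div_pow]
    -- z = s^d - w^d/s^d
    have hEc : (s^d)^2 = c^d := by
      rw [← pow_mul, mul_comm d 2, pow_mul, hs2]
    have hEpos : 0 < s^d := pow_pos hspos d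
    have hz : s^d - w^d/s^d = (c^d - w^d)/s^d := by
      field_simp
      nlinarith [hEc]
    rw [hz, div_pow, hEc]
    -- key facts
    have hq : (1 - 1/D) = (D-1)/D := by
      field_simp
    have hwc : w ≤ ((D-1)/(D+1))*c := by
      rw [div_mul_eq_mul_div, le_div_iff₀ (by linarith)]
      nlinarith
    have hcd : (0:ℝ) < c^d := pow_pos hc d
    have hwd : w^d ≤ (((D-1)/(D+1)))^d * c^d := by
      calc w^d ≤ (((D-1)/(D+1))*c)^d := pow_le_pow_left₀ hw0 hwc d
        _ = (((D-1)/(D+1)))^d * c^d := mul_pow _ _ d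
    have hK := Kd d hd
    rw [← hD] at hK
    have hkey : 2*((1-1/D))^(d-1)*c^d < c^d - w^d := by
      rw [hq]
      have hm := mul_lt_mul_of_pos_right (show (((D:ℝ)-1)/(D+1))^d + 2*(((D:ℝ)-1)/D)^(d-1) < 1 from hK) hcd
      linarith [hwd, hm]
    have hΔpos : 0 < c^d - w^d := by
      have hq0 : (0:ℝ) ≤ (1-1/D) := by rw [hq]; apply div_nonneg <;> linarith
      have h1 : (0:ℝ) ≤ 2*((1-1/D))^(d-1)*c^d :=
        mul_nonneg (mul_nonneg (by norm_num) (pow_nonneg hq0 _)) (le_of_lt hcd)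
      linarith
    -- conclude
    calc (1 - 1/D)^(d-1) * (2*c^d - 2*w^d)
        = (2*(1-1/D)^(d-1)*c^d) * ((c^d - w^d)/c^d) := by field_simp
      _ < (c^d - w^d) * ((c^d - w^d)/c^d) := by
          exact mul_lt_mul_of_pos_right hkey (div_pos hΔpos hcd)
      _ = (c^d - w^d)^2/c^d := by ring

set_option maxHeartbeats 1000000 in
lemma w2_general (d : ℕ) (hd : 6 ≤ d) (t : ℝ) (ht0 : 0 < t) (ht1 : t ≤ 1)
    (hτ : t^2*(d:ℝ) ≤ 1) :
    ∃ x y : ℝ, x^2 + y^2 = 1 ∧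
      (1 - 1/(d:ℝ))^(d-1) * (2*(1+t^2)^d - 2*(1-t^2)^d) < |(x + t*y)^d - (x - t*y)^d|^2 := by
  set D := (d:ℝ) with hD
  have hD6 : (6:ℝ) ≤ D := by rw [hD]; exact_mod_cast hd
  have hDpos : (0:ℝ) < D := by linarith
  set q : ℝ := 1 - 1/D with hqdef
  have hqpos : (0:ℝ) < q := by
    rw [hqdef]
    have : 1/D ≤ 1/6 := one_div_le_one_div_of_le (by norm_num) hD6
    linarith
  set p := Real.sqrt q with hpdef
  have hp2 : p^2 = q := Real.sq_sqrt (le_of_lt hqpos)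
  have hppos : 0 < p := Real.sqrt_pos.mpr hqpos
  set y := Real.sqrt (1/D) with hydef
  have hy2 : y^2 = 1/D := Real.sq_sqrt (by positivity)
  have hy0 : 0 ≤ y := Real.sqrt_nonneg _
  set r := t*y with hrdef
  have hr0 : 0 ≤ r := mul_nonneg (le_of_lt ht0) hy0
  have hr2 : r^2 = t^2/D := by rw [hrdef, mul_pow, hy2]; ring
  clear_value D q p y r
  have hrp : r ≤ p := by
    have h1 : r^2 ≤ p^2 := by
      rw [hr2, hp2, hqdef]
      have ht2D : t^2/D ≤ 1/D^2 := by
        rw [div_le_div_iff₀ hDpos (by positivity)]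
        have := mul_le_mul_of_nonneg_left hτ (le_of_lt hDpos)
        nlinarith [this]
      have : 1/D^2 ≤ 1 - 1/D := by
        rw [div_le_iff₀ (by positivity : (0:ℝ) < D^2)]
        have hD1 : (1:ℝ)/D ≤ 1/6 := one_div_le_one_div_of_le (by norm_num) hD6
        have e : (1 - 1/D)*D^2 = D^2 - D := by field_simp
        rw [e]
        nlinarith [hD6]
      linarith
    exact (pow_le_pow_iff_left₀ hr0 (le_of_lt hppos) two_ne_zero).mp h1
  refine ⟨p, y, ?_, ?_⟩
  · rw [hp2, hy2, hqdef]; field_simp; ring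
  · rw [← hrdef, sq_abs]
    set τ := t^2 with hτdef
    clear_value τ
    have hτ0 : 0 < τ := by rw [hτdef]; positivity
    have hτ1 : D*τ ≤ 1 := by linarith [hτ]
    set z₀ := (p+r)^d - (p-r)^d with hz₀
    clear_value z₀
    -- from FG
    obtain ⟨Fd, _⟩ := FG p r hr0 hrp d
    rw [← hD, ← hz₀] at Fd
    have e1 : p^(d+2) = p^d*p^2 := by ring
    rw [e1, hp2] at Fd
    set P := p^d with hP
    clear_value P
    have hPpos : 0 < P := by rw [hP]; exact pow_pos hppos d
    -- Fd : 2*D*(P*q)*r + (D*(D-1)*(D-2)/3)*P*r^3 ≤ p^3*z₀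
    have htrip := trip_nonneg d
    rw [← hD] at htrip
    have hLnn : 0 ≤ 2*D*(P*q)*r + (D*(D-1)*(D-2)/3)*P*r^3 := by
      have : 0 ≤ (D*(D-1)*(D-2)/3)*P*r^3 := by
        apply mul_nonneg (mul_nonneg (by linarith [htrip]) (le_of_lt hPpos))
        positivity
      have h2 : 0 ≤ 2*D*(P*q)*r := by
        apply mul_nonneg (mul_nonneg (mul_nonneg (by norm_num) (le_of_lt hDpos)) _) hr0
        exact mul_nonneg (le_of_lt hPpos) (le_of_lt hqpos)
      exact add_nonneg h2 this
    have hz0nn : 0 ≤ z₀ := by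
      have h := le_trans hLnn Fd
      rcases le_or_gt 0 z₀ with hyes | hno
      · exact hyes
      · exfalso
        have : p^3*z₀ < 0 := mul_neg_of_pos_of_neg (pow_pos hppos 3) hno
        linarith
    have hsq : (2*D*(P*q)*r + (D*(D-1)*(D-2)/3)*P*r^3)^2 ≤ (p^3*z₀)^2 := by
      apply pow_le_pow_left₀ hLnn Fd
    have hqz : (p^3*z₀)^2 = q^3*z₀^2 := by
      have : (p^3)^2 = q^3 := by rw [← hp2]; ring
      calc (p^3*z₀)^2 = (p^3)^2*z₀^2 := by ring
        _ = q^3*z₀^2 := by rw [this]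
    rw [hqz] at hsq
    -- from HE
    obtain ⟨hH, _⟩ := HE d τ (le_of_lt hτ0) (by rw [← hD]; exact hτ1)
    rw [← hD] at hH
    -- power bookkeeping
    have hqP : q^d = P^2 := by rw [hP, ← hp2, ← pow_mul, ← pow_mul]; ring_nf
    have hq3 : q^(d-1)*q^3 = P^2*q^2 := by
      rw [← pow_add, show d-1+3 = d+2 by omega, pow_add, hqP]
    -- main chain
    have main : q^3*(q^(d-1)*(2*(1+τ)^d - 2*(1-τ)^d)) < q^3*z₀^2 := by
      have step1 : q^3*(q^(d-1)*(2*(1+τ)^d - 2*(1-τ)^d))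
          = 2*(P^2*q^2)*((1+τ)^d - (1-τ)^d) := by
        calc q^3*(q^(d-1)*(2*(1+τ)^d - 2*(1-τ)^d))
            = (q^(d-1)*q^3)*(2*(1+τ)^d - 2*(1-τ)^d) := by ring
          _ = (P^2*q^2)*(2*(1+τ)^d - 2*(1-τ)^d) := by rw [hq3]
          _ = 2*(P^2*q^2)*((1+τ)^d - (1-τ)^d) := by ring
      rw [step1]
      have step2 : 2*(P^2*q^2)*((1+τ)^d - (1-τ)^d) ≤ 2*(P^2*q^2)*(2*D*τ + (2/5)*D^3*τ^3) := by
        apply mul_le_mul_of_nonneg_left hH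
        positivity
      -- strict arithmetic step
      have aux : 2*q*(2*D*τ + (2/5)*D^3*τ^3) < 4*D*q*τ + (4/3)*(D-1)*(D-2)*τ^2 := by
        have hqD : q*D = D - 1 := by rw [hqdef]; field_simp
        have hnn : 0 ≤ D*(D-1)*τ^2 :=
          mul_nonneg (mul_nonneg (le_of_lt hDpos) (by linarith)) (by positivity)
        have f1 : D^2*(D-1)*τ^3 ≤ D*(D-1)*τ^2 := by
          calc D^2*(D-1)*τ^3 = (D*(D-1)*τ^2)*(D*τ) := by ring
            _ ≤ (D*(D-1)*τ^2)*1 := mul_le_mul_of_nonneg_left hτ1 hnn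
            _ = D*(D-1)*τ^2 := by ring
        have f2 : (4/5)*D*(D-1)*τ^2 < (4/3)*(D-1)*(D-2)*τ^2 := by
          have hlt : (4/5)*D < (4/3)*(D-2) := by linarith
          have hpos : 0 < (D-1)*τ^2 := mul_pos (by linarith) (by positivity)
          calc (4/5)*D*(D-1)*τ^2 = ((4/5)*D)*((D-1)*τ^2) := by ring
            _ < ((4/3)*(D-2))*((D-1)*τ^2) := mul_lt_mul_of_pos_right hlt hpos
            _ = (4/3)*(D-1)*(D-2)*τ^2 := by ring
        have hmain : (4/5)*q*D^3*τ^3 < (4/3)*(D-1)*(D-2)*τ^2 := by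
          have e : (4/5)*q*D^3*τ^3 = (4/5)*((q*D)*(D^2*τ^3)) := by ring
          rw [e, hqD]
          calc (4/5)*((D-1)*(D^2*τ^3)) = (4/5)*(D^2*(D-1)*τ^3) := by ring
            _ ≤ (4/5)*(D*(D-1)*τ^2) := by linarith [f1]
            _ = (4/5)*D*(D-1)*τ^2 := by ring
            _ < (4/3)*(D-1)*(D-2)*τ^2 := f2
        linarith [hmain]
      have step3 : 2*(P^2*q^2)*(2*D*τ + (2/5)*D^3*τ^3)
          < 4*D^2*P^2*q^2*r^2 + (4/3)*D^2*(D-1)*(D-2)*P^2*q*r^4 := by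
        have hr4 : r^4 = τ^2/D^2 := by
          have : r^4 = (r^2)^2 := by ring
          rw [this, hr2, hτdef]; ring
        have hscal : 0 < P^2*q := by positivity
        have hm := mul_lt_mul_of_pos_left aux hscal
        have er2 : 4*D^2*P^2*q^2*r^2 = P^2*q*(4*D*q*τ) := by
          rw [hr2]; field_simp
        have er4 : (4/3)*D^2*(D-1)*(D-2)*P^2*q*r^4 = P^2*q*((4/3)*(D-1)*(D-2)*τ^2) := by
          rw [hr4]; field_simp
        calc 2*(P^2*q^2)*(2*D*τ + (2/5)*D^3*τ^3) = P^2*q*(2*q*(2*D*τ + (2/5)*D^3*τ^3)) := by ring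
          _ < P^2*q*(4*D*q*τ + (4/3)*(D-1)*(D-2)*τ^2) := hm
          _ = 4*D^2*P^2*q^2*r^2 + (4/3)*D^2*(D-1)*(D-2)*P^2*q*r^4 := by rw [er2, er4]; ring
      have step4 : 4*D^2*P^2*q^2*r^2 + (4/3)*D^2*(D-1)*(D-2)*P^2*q*r^4 ≤ q^3*z₀^2 := by
        have expandL : (2*D*(P*q)*r + (D*(D-1)*(D-2)/3)*P*r^3)^2
            = 4*D^2*P^2*q^2*r^2 + (4/3)*D^2*(D-1)*(D-2)*P^2*q*r^4
              + (D*(D-1)*(D-2)/3)^2*P^2*r^6 := by ring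
        rw [expandL] at hsq
        have h6 : 0 ≤ (D*(D-1)*(D-2)/3)^2*P^2*r^6 := by positivity
        linarith [hsq]
      linarith [step2, step3, step4]
    exact lt_of_mul_lt_mul_left main (by positivity)

lemma bdd (d : ℕ) (t : ℝ) (ht : |t| ≤ 1) :
    BddAbove {z : ℝ | ∃ x y : ℝ, x ^ 2 + y ^ 2 = 1 ∧
      z = |(x + t * y) ^ d - (x - t * y) ^ d|} := by
  refine ⟨2^d + 2^d, ?_⟩
  rintro z ⟨x, y, hxy, rfl⟩
  have hx : |x| ≤ 1 := by
    have h2 : x^2 ≤ 1 := by nlinarith [sq_nonneg y]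
    have := abs_nonneg x
    nlinarith [sq_abs x]
  have hy : |y| ≤ 1 := by
    have h2 : y^2 ≤ 1 := by nlinarith [sq_nonneg x]
    have := abs_nonneg y
    nlinarith [sq_abs y]
  have ha : |x + t*y| ≤ 2 := by
    calc |x + t*y| ≤ |x| + |t*y| := abs_add_le _ _
      _ = |x| + |t| * |y| := by rw [abs_mul]
      _ ≤ 2 := by nlinarith [abs_nonneg t, abs_nonneg y]
  have hb : |x - t*y| ≤ 2 := by
    calc |x - t*y| ≤ |x| + |t*y| := abs_sub _ _
      _ = |x| + |t| * |y| := by rw [abs_mul]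
      _ ≤ 2 := by nlinarith [abs_nonneg t, abs_nonneg y]
  calc |(x + t*y)^d - (x - t*y)^d| ≤ |(x + t*y)^d| + |(x - t*y)^d| := abs_sub _ _
    _ = |x + t*y|^d + |x - t*y|^d := by rw [abs_pow, abs_pow]
    _ ≤ 2^d + 2^d := by
        have g1 : |x + t*y|^d ≤ 2^d := pow_le_pow_left₀ (abs_nonneg _) ha d
        have g2 : |x - t*y|^d ≤ 2^d := pow_le_pow_left₀ (abs_nonneg _) hb d
        linarith

lemma w2_small3 (t : ℝ) (ht0 : 0 < t) (ht1 : t ≤ 1) :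
    ∃ x y : ℝ, x^2 + y^2 = 1 ∧
      (1 - 1/((3:ℕ):ℝ))^(3-1) * (2*(1+t^2)^3 - 2*(1-t^2)^3) < |(x + t*y)^3 - (x - t*y)^3|^2 := by
  refine ⟨Real.sqrt (2/3), Real.sqrt (1/3), ?_, ?_⟩
  · rw [Real.sq_sqrt (by norm_num), Real.sq_sqrt (by norm_num)]; norm_num
  · rw [sq_abs]
    set p := Real.sqrt (2/3) with hp
    set y := Real.sqrt (1/3) with hy
    have hp2 : p^2 = 2/3 := Real.sq_sqrt (by norm_num)
    have hy2 : y^2 = 1/3 := Real.sq_sqrt (by norm_num)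
    have hy0 : 0 ≤ y := Real.sqrt_nonneg _
    set r := t*y with hr
    clear_value p y
    have hr2 : r^2 = t^2/3 := by rw [hr, mul_pow, hy2]; ring
    have hz : (p + r)^3 - (p - r)^3 = 6*p^2*r + 2*r^3 := by ring
    rw [hz, hp2]
    have e : (6*(2/3)*r + 2*r^3)^2 = 16*r^2 + 16*(r^2)^2 + 4*(r^2)^3 := by ring
    rw [e, hr2]
    norm_num
    have ht2 : t^2 ≤ 1 := by nlinarith
    have h6 : t^6 ≤ t^4 := by nlinarith [pow_pos ht0 4, mul_le_mul_of_nonneg_left ht2 (le_of_lt (pow_pos ht0 4))]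
    nlinarith [h6, pow_pos ht0 6]

lemma w2_small4 (t : ℝ) (ht0 : 0 < t) (ht1 : t^2*4 ≤ 1) :
    ∃ x y : ℝ, x^2 + y^2 = 1 ∧
      (1 - 1/((4:ℕ):ℝ))^(4-1) * (2*(1+t^2)^4 - 2*(1-t^2)^4) < |(x + t*y)^4 - (x - t*y)^4|^2 := by
  refine ⟨Real.sqrt (3/4), Real.sqrt (1/4), ?_, ?_⟩
  · rw [Real.sq_sqrt (by norm_num), Real.sq_sqrt (by norm_num)]; norm_num
  · rw [sq_abs]
    set p := Real.sqrt (3/4) with hp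
    set y := Real.sqrt (1/4) with hy
    have hp2 : p^2 = 3/4 := Real.sq_sqrt (by norm_num)
    have hy2 : y^2 = 1/4 := Real.sq_sqrt (by norm_num)
    have hp0 : 0 ≤ p := Real.sqrt_nonneg _
    set r := t*y with hr
    clear_value p y
    have hr2 : r^2 = t^2/4 := by rw [hr, mul_pow, hy2]; ring
    have hz : (p + r)^4 - (p - r)^4 = 8*p^3*r + 8*p*r^3 := by ring
    rw [hz]
    have e : (8*p^3*r + 8*p*r^3)^2 = 64*(p^2)^3*r^2 + 128*(p^2)^2*(r^2)^2 + 64*p^2*(r^2)^3 := by ring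
    rw [e, hr2, hp2]
    norm_num
    have ht2 : t^2 ≤ 1/4 := by nlinarith
    have h6 : t^6 ≤ t^4/4 := by nlinarith [mul_le_mul_of_nonneg_left ht2 (le_of_lt (pow_pos ht0 4))]
    nlinarith [h6, pow_pos ht0 4, pow_pos ht0 6]

lemma w2_small5 (t : ℝ) (ht0 : 0 < t) (ht1 : t^2*5 ≤ 1) :
    ∃ x y : ℝ, x^2 + y^2 = 1 ∧
      (1 - 1/((5:ℕ):ℝ))^(5-1) * (2*(1+t^2)^5 - 2*(1-t^2)^5) < |(x + t*y)^5 - (x - t*y)^5|^2 := by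
  refine ⟨Real.sqrt (4/5), Real.sqrt (1/5), ?_, ?_⟩
  · rw [Real.sq_sqrt (by norm_num), Real.sq_sqrt (by norm_num)]; norm_num
  · rw [sq_abs]
    set p := Real.sqrt (4/5) with hp
    set y := Real.sqrt (1/5) with hy
    have hp2 : p^2 = 4/5 := Real.sq_sqrt (by norm_num)
    have hy2 : y^2 = 1/5 := Real.sq_sqrt (by norm_num)
    set r := t*y with hr
    clear_value p y
    have hr2 : r^2 = t^2/5 := by rw [hr, mul_pow, hy2]; ring
    have hz : (p + r)^5 - (p - r)^5 = 10*(p^2)^2*r + 20*p^2*r^3 + 2*r^5 := by ring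
    rw [hz, hp2]
    have e : (10*(4/5)^2*r + 20*(4/5)*r^3 + 2*r^5)^2
        = (32/5)^2*r^2 + 2*(32/5)*16*(r^2)^2 + (256 + 2*(32/5)*2)*(r^2)^3 + 64*(r^2)^4 + 4*(r^2)^5 := by ring
    rw [e, hr2]
    norm_num
    have ht2 : t^2 ≤ 1/5 := by nlinarith
    have h6 : t^6 ≤ t^4/5 := by nlinarith [mul_le_mul_of_nonneg_left ht2 (le_of_lt (pow_pos ht0 4))]
    have h8 : t^8 ≤ t^6/5 := by nlinarith [mul_le_mul_of_nonneg_left ht2 (le_of_lt (pow_pos ht0 6))]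
    have h10 : t^10 ≤ t^8/5 := by nlinarith [mul_le_mul_of_nonneg_left ht2 (le_of_lt (pow_pos ht0 8))]
    nlinarith [h6, h8, h10, pow_pos ht0 4, pow_pos ht0 6, pow_pos ht0 8, pow_pos ht0 10]

lemma conclude (d : ℕ) (t : ℝ) (ht : |t| ≤ 1) (R : ℝ)
    (h : ∃ x y : ℝ, x^2 + y^2 = 1 ∧ R < |(x + t*y)^d - (x - t*y)^d|^2) :
    R < (sSup {z : ℝ | ∃ x y : ℝ, x ^ 2 + y ^ 2 = 1 ∧
      z = |(x + t * y) ^ d - (x - t * y) ^ d|}) ^ 2 := by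
  obtain ⟨x, y, hxy, hlt⟩ := h
  have hmem : |(x + t*y)^d - (x - t*y)^d| ∈ {z : ℝ | ∃ x y : ℝ, x ^ 2 + y ^ 2 = 1 ∧
      z = |(x + t * y) ^ d - (x - t * y) ^ d|} := ⟨x, y, hxy, rfl⟩
  have hle := le_csSup (bdd d t ht) hmem
  have hsq := pow_le_pow_left₀ (abs_nonneg _) hle 2
  linarith

theorem diff_equal_norm_ratio (d : ℕ) (hd : 3 ≤ d) (t : ℝ) (ht : t ∈ Set.Ioc (0 : ℝ) 1) :
    (sSup {z : ℝ | ∃ x y : ℝ, x ^ 2 + y ^ 2 = 1 ∧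
        z = |(x + t * y) ^ d - (x - t * y) ^ d|}) ^ 2 >
      (1 - 1 / (d : ℝ)) ^ (d - 1) * (2 * (1 + t ^ 2) ^ d - 2 * (1 - t ^ 2) ^ d) := by
  obtain ⟨ht0, ht1⟩ := ht
  have htabs : |t| ≤ 1 := by rw [abs_of_pos ht0]; exact ht1
  apply conclude d t htabs
  rcases lt_or_ge d 6 with hd6 | hd6
  · interval_cases d
    · exact w2_small3 t ht0 ht1
    · by_cases hsm : t^2*((4:ℕ):ℝ) ≤ 1
      · have := w2_small4 t ht0 (by exact_mod_cast hsm)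
        exact_mod_cast this
      · push_neg at hsm
        exact w1_case 4 (by norm_num) t ht0 ht1 (le_of_lt hsm)
    · by_cases hsm : t^2*((5:ℕ):ℝ) ≤ 1
      · have := w2_small5 t ht0 (by exact_mod_cast hsm)
        exact_mod_cast this
      · push_neg at hsm
        exact w1_case 5 (by norm_num) t ht0 ht1 (le_of_lt hsm)
  · by_cases hsm : t^2*(d:ℝ) ≤ 1
    · exact w2_general d hd6 t ht0 ht1 hsm
    · push_neg at hsm
      exact w1_case d (by omega) t ht0 ht1 (le_of_lt hsm)
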